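/- arXiv:2004.14681 — 6 statements merged into one kernel-verified Lean document; each statement's English description precedes it below -/
import Mathlib

section
/- Let K be a positive definite diagonal d×d matrix, ρ < 1 a nonnegative scalar, Θ a d×d matrix satisfying Θᵀ K Θ ⪯ ρ·K, and σ : ℝᵈ → ℝᵈ a coordinatewise map where each coordinate function σᵢ : ℝ → ℝ is 1-Lipschitz and satisfies σᵢ(0) = 0. Then for all x ∈ ℝᵈ, ‖σ(Θx)‖_K² ≤ ρ·‖x‖_K², where ‖x‖_K² = ⟨x, Kx⟩. -/
open Matrix

/-- If K is a positive definite diagonal matrix, ρ < 1 nonnegative,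
ΘᵀKΘ ⪯ ρK, and σ is a coordinatewise 1-Lipschitz map with σᵢ(0) = 0, then
‖σ(Θx)‖_K² ≤ ρ‖x‖_K² for all x. -/
theorem stmt0 (d : ℕ) (K Θ : Matrix (Fin d) (Fin d) ℝ)
    (hKdiag : K.IsDiag) (hKpos : K.PosDef)
    (ρ : ℝ) (hρ0 : 0 ≤ ρ) (hρ1 : ρ < 1)
    (hLyap : (ρ • K - Θᵀ * K * Θ).PosSemidef)
    (σ : Fin d → ℝ → ℝ)
    (hLip : ∀ i, LipschitzWith 1 (σ i))
    (hzero : ∀ i, σ i 0 = 0) :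
    ∀ x : Fin d → ℝ,
      (fun i => σ i (Θ.mulVec x i)) ⬝ᵥ K.mulVec (fun i => σ i (Θ.mulVec x i))
        ≤ ρ * (x ⬝ᵥ K.mulVec x) := by
  intro x
  set y := Θ.mulVec x with hy
  have habs : ∀ i t, |σ i t| ≤ |t| := by
    intro i t
    have := (hLip i).dist_le_mul t 0
    simpa [hzero i, Real.dist_eq] using this
  have hKd : K = diagonal K.diag := hKdiag.diagonal_diag.symm
  have hdiag : ∀ i, 0 < K.diag i := by
    rw [hKd] at hKpos
    exact posDef_diagonal_iff.mp hKpos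
  have h1 : (fun i => σ i (y i)) ⬝ᵥ K.mulVec (fun i => σ i (y i)) ≤ y ⬝ᵥ K.mulVec y := by
    conv_lhs => rw [hKd]
    conv_rhs => rw [hKd]
    simp only [dotProduct, mulVec_diagonal]
    apply Finset.sum_le_sum
    intro i _
    have h := habs i (y i)
    have h2 := (hdiag i).le
    have hsq : σ i (y i) ^ 2 ≤ (y i) ^ 2 := by
      rw [← sq_abs, ← sq_abs (y i)]
      exact pow_le_pow_left₀ (abs_nonneg _) h 2
    nlinarith [hsq]
  have h2 : y ⬝ᵥ K.mulVec y ≤ ρ * (x ⬝ᵥ K.mulVec x) := by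
    have h := hLyap.dotProduct_mulVec_nonneg x
    simp only [star_trivial, sub_mulVec, dotProduct_sub, smul_mulVec,
      dotProduct_smul, smul_eq_mul, ← mulVec_mulVec] at h
    rw [dotProduct_mulVec x Θᵀ, vecMul_transpose] at h
    linarith
  linarith
end

section
/- Let Θ be the 2×2 matrix with rows (1, 1) and (−1, −1), and let relu : ℝ² → ℝ² be the coordinatewise map x ↦ max(x, 0). Then relu(Θ e₁) = e₁ where e₁ = (1,0), and consequently the map x ↦ relu(Θx) is not globally exponentially stable: its k-fold composition applied to e₁ equals e₁ for all k. -/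
open Matrix

/-- For Θ = [[1,1],[−1,−1]] and the coordinatewise ReLU, we have
relu(Θe₁) = e₁; hence the k-fold iterates fix e₁ and the map x ↦ relu(Θx) is not
globally exponentially stable. -/
theorem stmt2 :
    let Θ : Matrix (Fin 2) (Fin 2) ℝ := !![1, 1; -1, -1]
    let relu : (Fin 2 → ℝ) → (Fin 2 → ℝ) := fun x i => max (x i) 0
    let f : (Fin 2 → ℝ) → (Fin 2 → ℝ) := fun x => relu (Θ.mulVec x)
    let e₁ : Fin 2 → ℝ := ![1, 0]
    (relu (Θ.mulVec e₁) = e₁) ∧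
    (∀ k : ℕ, 1 ≤ k → f^[k] e₁ = e₁) ∧
    ¬ ∃ C ρ : ℝ, 0 < C ∧ ρ < 1 ∧
        ∀ k : ℕ, 1 ≤ k → ∀ x : Fin 2 → ℝ,
          Real.sqrt (f^[k] x ⬝ᵥ f^[k] x) ≤ C * ρ ^ k * Real.sqrt (x ⬝ᵥ x) := by
  intro Θ relu f e₁
  have hfix : relu (Θ.mulVec e₁) = e₁ := by
    funext i
    fin_cases i <;>
      simp [relu, Θ, e₁, Matrix.mulVec, dotProduct, Fin.sum_univ_two]
  have hf : f e₁ = e₁ := hfix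
  have hiter : ∀ k : ℕ, f^[k] e₁ = e₁ := by
    intro k
    induction k with
    | zero => simp
    | succ n ih => rw [Function.iterate_succ_apply', ih, hf]
  refine ⟨hfix, fun k _ => hiter k, ?_⟩
  rintro ⟨C, ρ, hC, hρ, h⟩
  have he : e₁ ⬝ᵥ e₁ = 1 := by
    simp [e₁, dotProduct, Fin.sum_univ_two]
  have key : ∀ k : ℕ, 1 ≤ k → (1 : ℝ) ≤ C * ρ ^ k := by
    intro k hk
    have := h k hk e₁
    rw [hiter k, he, Real.sqrt_one, mul_one] at this
    exact this
  rcases le_or_gt ρ 0 with hρ0 | hρ0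
  · have h1 := key 1 le_rfl
    have : C * ρ ^ 1 ≤ 0 := mul_nonpos_of_nonneg_of_nonpos hC.le (by simpa using hρ0)
    linarith
  · obtain ⟨n, hn⟩ := exists_pow_lt_of_lt_one (by positivity : (0:ℝ) < 1 / C) hρ
    have hkey := key (n + 1) (Nat.succ_le_succ (Nat.zero_le n))
    have hpow : ρ ^ (n + 1) ≤ ρ ^ n := pow_le_pow_of_le_one hρ0.le hρ.le (Nat.le_succ n)
    have : C * ρ ^ (n + 1) < 1 := by
      calc C * ρ ^ (n + 1) ≤ C * ρ ^ n := by nlinarith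
        _ < C * (1 / C) := by exact (mul_lt_mul_iff_right₀ hC).2 hn
        _ = 1 := by field_simp
    linarith
end

section
/- Let F be a class of functions from ℝᵈ to ℝᵈ with f* ∈ F, let x₁, …, x_n ∈ ℝᵈ, ε₁, …, ε_n ∈ ℝᵈ, and set x_{i+1} = f*(x_i) + ε_i in the sense that the targets satisfy y_i = f*(x_i) + ε_i. If f̂ minimizes ∑_{i=1}^n ‖f(x_i) − y_i‖² over f ∈ F, then ∑_{i=1}^n ‖f̂(x_i) − f*(x_i)‖² ≤ sup_{f ∈ F} ∑_{i=1}^n [4⟨ε_i, f(x_i) − f*(x_i)⟩ − ‖f(x_i) − f*(x_i)‖²]. -/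
open Matrix

set_option maxHeartbeats 1000000 in
/-- Basic inequality for least squares: if f̂ minimizes the empirical
square loss over F ∋ f*, with targets y_i = f*(x_i) + ε_i, then the in-sample error of f̂
is bounded by the offset complexity sup over F. -/
theorem stmt3 (d n : ℕ) (F : Set ((Fin d → ℝ) → (Fin d → ℝ)))
    (fstar : (Fin d → ℝ) → (Fin d → ℝ)) (hfstar : fstar ∈ F)
    (x ε y : Fin n → (Fin d → ℝ))
    (hy : ∀ i, y i = fstar (x i) + ε i)
    (fhat : (Fin d → ℝ) → (Fin d → ℝ)) (hfhat : fhat ∈ F)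
    (hmin : ∀ f ∈ F,
      ∑ i, (fhat (x i) - y i) ⬝ᵥ (fhat (x i) - y i)
        ≤ ∑ i, (f (x i) - y i) ⬝ᵥ (f (x i) - y i)) :
    ((∑ i, (fhat (x i) - fstar (x i)) ⬝ᵥ (fhat (x i) - fstar (x i)) : ℝ) : EReal)
      ≤ ⨆ f ∈ F,
          ((∑ i, (4 * (ε i ⬝ᵥ (f (x i) - fstar (x i)))
            - (f (x i) - fstar (x i)) ⬝ᵥ (f (x i) - fstar (x i))) : ℝ) : EReal) := by
  have key : (∑ i, (fhat (x i) - fstar (x i)) ⬝ᵥ (fhat (x i) - fstar (x i)) : ℝ)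
      ≤ ∑ i, (4 * (ε i ⬝ᵥ (fhat (x i) - fstar (x i)))
            - (fhat (x i) - fstar (x i)) ⬝ᵥ (fhat (x i) - fstar (x i))) := by
    have h := hmin fstar hfstar
    simp only [hy] at h
    have hrw : ∀ i, (fhat (x i) - (fstar (x i) + ε i)) ⬝ᵥ (fhat (x i) - (fstar (x i) + ε i))
        = (fhat (x i) - fstar (x i)) ⬝ᵥ (fhat (x i) - fstar (x i))
          - 2 * (ε i ⬝ᵥ (fhat (x i) - fstar (x i))) + ε i ⬝ᵥ ε i := by
      intro i
      have : fhat (x i) - (fstar (x i) + ε i) = (fhat (x i) - fstar (x i)) - ε i := by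
        abel
      rw [this]
      simp only [sub_dotProduct, dotProduct_sub, dotProduct_comm (ε i)]
      ring
    have hrw2 : ∀ i, (fstar (x i) - (fstar (x i) + ε i)) ⬝ᵥ (fstar (x i) - (fstar (x i) + ε i))
        = ε i ⬝ᵥ ε i := by
      intro i
      have : fstar (x i) - (fstar (x i) + ε i) = -ε i := by abel
      rw [this]
      simp [neg_dotProduct, dotProduct_neg]
    simp only [hrw, hrw2, Finset.sum_add_distrib, Finset.sum_sub_distrib] at h
    have h2 : (∑ i, (fhat (x i) - fstar (x i)) ⬝ᵥ (fhat (x i) - fstar (x i)) : ℝ)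
        ≤ ∑ i, 2 * (ε i ⬝ᵥ (fhat (x i) - fstar (x i))) := by linarith
    rw [Finset.sum_sub_distrib]
    have : (∑ i, 4 * (ε i ⬝ᵥ (fhat (x i) - fstar (x i))) : ℝ)
        = 2 * ∑ i, 2 * (ε i ⬝ᵥ (fhat (x i) - fstar (x i))) := by
      rw [Finset.mul_sum]; congr 1; ext i; ring
    rw [this]
    linarith
  refine le_iSup_of_le fhat ?_
  refine le_iSup_of_le hfhat ?_
  exact EReal.coe_le_coe_iff.mpr key
end

section
/- Let ε ∼ N(0, I_d) be a standard Gaussian random vector in ℝᵈ, and let relu(t) = max(t, 0). For any two vectors u, v ∈ ℝᵈ, E[(relu(⟨u, ε⟩) − relu(⟨v, ε⟩))²] ≥ (1/4)·‖u − v‖². -/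
open MeasureTheory ProbabilityTheory Matrix

open Real

namespace Stmt6Aux

lemma g_pdf (x : ℝ) : gaussianPDFReal 0 1 x = (√(2*π))⁻¹ * rexp (-(1/2) * x^2) := by
  simp [gaussianPDFReal]
  ring_nf
  exact Or.inl trivial

lemma γ_def : gaussianReal 0 1
    = (volume : Measure ℝ).withDensity fun x => ((gaussianPDFReal 0 1 x).toNNReal : ENNReal) := by
  rw [gaussianReal_of_var_ne_zero 0 one_ne_zero]
  rfl

lemma integral_g01 (g : ℝ → ℝ) :
    ∫ x, g x ∂(gaussianReal 0 1) = ∫ x, gaussianPDFReal 0 1 x * g x := by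
  rw [γ_def, integral_withDensity_eq_integral_smul (measurable_gaussianPDFReal 0 1).real_toNNReal g]
  congr 1
  ext x
  simp [NNReal.smul_def, Real.coe_toNNReal _ (gaussianPDFReal_nonneg 0 1 x)]

lemma integrable_g01_iff (g : ℝ → ℝ) :
    Integrable g (gaussianReal 0 1) ↔ Integrable (fun x => gaussianPDFReal 0 1 x * g x) := by
  rw [γ_def, integrable_withDensity_iff_integrable_smul (measurable_gaussianPDFReal 0 1).real_toNNReal]
  constructor <;> intro h <;> refine h.congr (Filter.Eventually.of_forall fun x => ?_) <;>
    simp [NNReal.smul_def, Real.coe_toNNReal _ (gaussianPDFReal_nonneg 0 1 x)]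

end Stmt6Aux

namespace Stmt6Aux

lemma rpow_two' (x : ℝ) : x ^ (2:ℝ) = x ^ 2 := by
  rw [show (2:ℝ) = ((2:ℕ):ℝ) by norm_num, Real.rpow_natCast]

lemma integrable_sq_g01 : Integrable (fun x : ℝ => x ^ 2) (gaussianReal 0 1) := by
  rw [integrable_g01_iff]
  have h := (integrable_rpow_mul_exp_neg_mul_sq (by norm_num : (0:ℝ) < 1/2)
      (by norm_num : (-1:ℝ) < 2)).const_mul (√(2*π))⁻¹
  refine h.congr (Filter.Eventually.of_forall fun x => ?_)
  simp only [g_pdf, rpow_two']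
  ring

lemma integrable_id_g01 : Integrable (fun x : ℝ => x) (gaussianReal 0 1) := by
  rw [integrable_g01_iff]
  have h := (integrable_rpow_mul_exp_neg_mul_sq (by norm_num : (0:ℝ) < 1/2)
      (by norm_num : (-1:ℝ) < 1)).const_mul (√(2*π))⁻¹
  refine h.congr (Filter.Eventually.of_forall fun x => ?_)
  simp only [g_pdf, Real.rpow_one]
  ring

lemma pdf_even (x : ℝ) : gaussianPDFReal 0 1 (-x) = gaussianPDFReal 0 1 x := by
  rw [g_pdf, g_pdf, neg_sq]

lemma integral_id_g01 : ∫ x, x ∂(gaussianReal 0 1) = 0 := by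
  rw [integral_g01]
  set h : ℝ → ℝ := fun x => gaussianPDFReal 0 1 x * x with hh
  have key : ∫ x, h (-x) = ∫ x, h x :=
    MeasurePreserving.integral_comp (Measure.measurePreserving_neg (volume : Measure ℝ))
      (Homeomorph.neg ℝ).measurableEmbedding h
  have hodd : ∀ x, h (-x) = - h x := fun x => by
    simp only [hh, pdf_even]; ring
  simp_rw [hodd, integral_neg] at key
  linarith

end Stmt6Aux

namespace Stmt6Aux

lemma key_int : ∫ x : ℝ, x ^ 2 * rexp (-(1/2) * x ^ 2) = √(2*π) := by
  have h0 : (fun x : ℝ => x ^ 2 * rexp (-(1/2) * x ^ 2))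
      = fun x : ℝ => |x| ^ 2 * rexp (-(1/2) * |x| ^ 2) := by
    funext x; rw [sq_abs]
  rw [h0, integral_comp_abs (f := fun t : ℝ => t ^ 2 * rexp (-(1/2) * t ^ 2))]
  have h1 : ∫ x in Set.Ioi (0:ℝ), x ^ 2 * rexp (-(1/2) * x ^ 2)
      = ((1:ℝ)/2) ^ (-((2:ℝ)+1)/2) * (1/2) * Real.Gamma (((2:ℝ)+1)/2) := by
    rw [← integral_rpow_mul_exp_neg_mul_rpow (by norm_num : (0:ℝ) < 2)
      (by norm_num : (-1:ℝ) < 2) (by norm_num : (0:ℝ) < 1/2)]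
    refine setIntegral_congr_fun measurableSet_Ioi fun x _ => ?_
    simp only [rpow_two']
  rw [h1]
  have hG : Real.Gamma (((2:ℝ)+1)/2) = √π / 2 := by
    rw [show ((2:ℝ)+1)/2 = 1/2 + 1 by norm_num, Real.Gamma_add_one (by norm_num),
      Real.Gamma_one_half_eq]
    ring
  have hp : ((1:ℝ)/2) ^ (-((2:ℝ)+1)/2) = 2 * √2 := by
    rw [show (-((2:ℝ)+1)/2) = -(3/2) by norm_num, one_div, Real.inv_rpow (by norm_num),
      Real.rpow_neg (by norm_num), inv_inv,
      show (3/2 : ℝ) = 1 + 1/2 by norm_num, Real.rpow_add (by norm_num), Real.rpow_one,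
      ← Real.sqrt_eq_rpow]
  rw [hG, hp, Real.sqrt_mul (by norm_num : (0:ℝ) ≤ 2)]
  ring

lemma integral_sq_g01 : ∫ x, x ^ 2 ∂(gaussianReal 0 1) = 1 := by
  rw [integral_g01]
  have h0 : (fun x : ℝ => gaussianPDFReal 0 1 x * x ^ 2)
      = fun x : ℝ => (√(2*π))⁻¹ * (x ^ 2 * rexp (-(1/2) * x ^ 2)) := by
    funext x; rw [g_pdf]; ring
  rw [h0, integral_const_mul, key_int, inv_mul_cancel₀]
  positivity

end Stmt6Aux

namespace Stmt6Aux

section PiGauss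

noncomputable local instance gms : MeasureSpace ℝ := ⟨gaussianReal 0 1⟩

local instance : IsProbabilityMeasure (volume : Measure ℝ) :=
  inferInstanceAs (IsProbabilityMeasure (gaussianReal 0 1))

variable {d : ℕ}

def f2 (i j k : Fin d) : ℝ → ℝ := fun x => (if k = i then x else 1) * (if k = j then x else 1)

lemma f2_int (i j k : Fin d) : Integrable (f2 i j k) := by
  unfold f2
  by_cases hi : k = i
  · by_cases hj : k = j
    · simp only [if_pos hi, if_pos hj]
      have h : (fun x : ℝ => x * x) = fun x : ℝ => x ^ 2 := funext fun x => (sq x).symm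
      rw [h]; exact integrable_sq_g01
    · simp only [if_pos hi, if_neg hj, mul_one]; exact integrable_id_g01
  · by_cases hj : k = j
    · simp only [if_neg hi, if_pos hj, one_mul]; exact integrable_id_g01
    · simp only [if_neg hi, if_neg hj, mul_one]; exact integrable_const 1

lemma f2_prod (i j : Fin d) (ε : Fin d → ℝ) : ∏ k, f2 i j k (ε k) = ε i * ε j := by
  unfold f2
  rw [Finset.prod_mul_distrib]
  simp [Finset.prod_ite_eq']

lemma integrable_cross (i j : Fin d) : Integrable (fun ε : Fin d → ℝ => ε i * ε j) := by
  have : (fun ε : Fin d → ℝ => ε i * ε j) = fun ε => ∏ k, f2 i j k (ε k) :=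
    funext fun ε => (f2_prod i j ε).symm
  rw [this]
  exact Integrable.fintype_prod (f := f2 i j) (f2_int i j)

lemma integral_cross (i j : Fin d) :
    ∫ ε : Fin d → ℝ, ε i * ε j = if i = j then 1 else 0 := by
  have h0 : (fun ε : Fin d → ℝ => ε i * ε j) = fun ε => ∏ k, f2 i j k (ε k) :=
    funext fun ε => (f2_prod i j ε).symm
  rw [h0, MeasureTheory.volume_pi, MeasureTheory.integral_fintype_prod_eq_prod (f2 i j)]
  by_cases h : i = j
  · subst h
    rw [if_pos rfl]
    have hk : ∀ k, ∫ x : ℝ, f2 i i k x = 1 := by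
      intro k
      by_cases hk : k = i
      · subst hk
        unfold f2
        simp only [if_pos rfl]
        calc ∫ x : ℝ, x * x = ∫ x : ℝ, x ^ 2 := by congr 1; funext x; ring
          _ = 1 := integral_sq_g01
      · unfold f2
        simp [hk]
    simp [hk]
  · rw [if_neg h]
    apply Finset.prod_eq_zero (Finset.mem_univ i)
    unfold f2
    simp only [if_pos rfl, if_neg h, mul_one]
    exact integral_id_g01

lemma integrable_dot_sq (w : Fin d → ℝ) :
    Integrable (fun ε : Fin d → ℝ => (w ⬝ᵥ ε) ^ 2) := by
  have hexp : (fun ε : Fin d → ℝ => (w ⬝ᵥ ε) ^ 2)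
      = fun ε => ∑ i, ∑ j, (w i * w j) * (ε i * ε j) := by
    funext ε
    rw [dotProduct, sq, Finset.sum_mul_sum]
    refine Finset.sum_congr rfl fun i _ => Finset.sum_congr rfl fun j _ => by ring
  rw [hexp]
  exact integrable_finset_sum _ fun i _ =>
    integrable_finset_sum _ fun j _ => (integrable_cross i j).const_mul _

lemma integral_dot_sq (w : Fin d → ℝ) :
    ∫ ε : Fin d → ℝ, (w ⬝ᵥ ε) ^ 2 = w ⬝ᵥ w := by
  have hexp : (fun ε : Fin d → ℝ => (w ⬝ᵥ ε) ^ 2)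
      = fun ε => ∑ i, ∑ j, (w i * w j) * (ε i * ε j) := by
    funext ε
    rw [dotProduct, sq, Finset.sum_mul_sum]
    refine Finset.sum_congr rfl fun i _ => Finset.sum_congr rfl fun j _ => by ring
  rw [hexp, integral_finset_sum _ (fun i _ =>
    integrable_finset_sum _ fun j _ => (integrable_cross i j).const_mul _)]
  have hi : ∀ i : Fin d, ∫ ε : Fin d → ℝ, ∑ j, (w i * w j) * (ε i * ε j)
      = ∑ j, (w i * w j) * (if i = j then 1 else 0) := by
    intro i
    rw [integral_finset_sum _ (fun j _ => (integrable_cross i j).const_mul _)]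
    exact Finset.sum_congr rfl fun j _ => by rw [integral_const_mul, integral_cross]
  simp only [hi, mul_ite, mul_one, mul_zero, Finset.sum_ite_eq, Finset.mem_univ, if_true]
  rfl

lemma neg_mp_one : MeasurePreserving (fun x : ℝ => -x) (gaussianReal 0 1) (gaussianReal 0 1) := by
  refine ⟨measurable_neg, ?_⟩
  have h := gaussianReal_map_const_mul (μ := 0) (v := 1) (-1)
  have h2 : (⟨(-1:ℝ)^2, sq_nonneg _⟩ : NNReal) = 1 := by ext; norm_num
  simp only [neg_one_mul, mul_zero, h2, one_mul] at h
  convert h using 2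
  ext; norm_num

lemma neg_mp : MeasurePreserving (fun ε : Fin d → ℝ => -ε)
    (volume : Measure (Fin d → ℝ)) volume :=
  measurePreserving_pi (fun _ : Fin d => gaussianReal 0 1) (fun _ => gaussianReal 0 1)
    (fun _ => neg_mp_one)

lemma main_aux (d : ℕ) (u v : Fin d → ℝ) :
    (1 / 4 : ℝ) * ((u - v) ⬝ᵥ (u - v))
      ≤ ∫ ε : Fin d → ℝ,
          (max (u ⬝ᵥ ε) 0 - max (v ⬝ᵥ ε) 0) ^ 2
            ∂(Measure.pi fun _ : Fin d => gaussianReal 0 1) := by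
  have hvol : (Measure.pi fun _ : Fin d => gaussianReal 0 1) = (volume : Measure (Fin d → ℝ)) :=
    rfl
  rw [hvol]
  set f : (Fin d → ℝ) → ℝ := fun ε => (max (u ⬝ᵥ ε) 0 - max (v ⬝ᵥ ε) 0) ^ 2 with hf_def
  have cont_dot : ∀ a : Fin d → ℝ, Continuous fun ε : Fin d → ℝ => a ⬝ᵥ ε := by
    intro a
    exact continuous_finset_sum _ fun i _ => continuous_const.mul (continuous_apply i)
  have hf_cont : Continuous f :=
    (((cont_dot u).max continuous_const).sub ((cont_dot v).max continuous_const)).pow 2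
  have hbound : ∀ ε : Fin d → ℝ, f ε ≤ ((u - v) ⬝ᵥ ε) ^ 2 := by
    intro ε
    have h1 : |max (u ⬝ᵥ ε) 0 - max (v ⬝ᵥ ε) 0| ≤ |u ⬝ᵥ ε - v ⬝ᵥ ε| :=
      abs_max_sub_max_le_abs _ _ _
    have h2 : (u - v) ⬝ᵥ ε = u ⬝ᵥ ε - v ⬝ᵥ ε := sub_dotProduct u v ε
    calc f ε = |max (u ⬝ᵥ ε) 0 - max (v ⬝ᵥ ε) 0| ^ 2 := (sq_abs _).symm
      _ ≤ |u ⬝ᵥ ε - v ⬝ᵥ ε| ^ 2 := by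
          exact pow_le_pow_left₀ (abs_nonneg _) h1 2
      _ = ((u - v) ⬝ᵥ ε) ^ 2 := by rw [h2, sq_abs]
  have hf_int : Integrable f := by
    refine (integrable_dot_sq (u - v)).mono' hf_cont.aestronglyMeasurable
      (Filter.Eventually.of_forall fun ε => ?_)
    rw [Real.norm_eq_abs, abs_of_nonneg (sq_nonneg _)]
    exact hbound ε
  have emb : MeasurableEmbedding (fun ε : Fin d → ℝ => -ε) :=
    (Homeomorph.neg (Fin d → ℝ)).measurableEmbedding
  have hg_int : Integrable (fun ε : Fin d → ℝ => f (-ε)) :=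
    ((neg_mp (d := d)).integrable_comp_emb emb).mpr hf_int
  have h_sym : ∫ ε : Fin d → ℝ, f (-ε) = ∫ ε : Fin d → ℝ, f ε :=
    (neg_mp (d := d)).integral_comp emb f
  have pointwise : ∀ ε : Fin d → ℝ,
      (1 / 2 : ℝ) * ((u - v) ⬝ᵥ ε) ^ 2 ≤ f ε + f (-ε) := by
    intro ε
    have hu' : u ⬝ᵥ (-ε) = -(u ⬝ᵥ ε) := dotProduct_neg u ε
    have hv' : v ⬝ᵥ (-ε) = -(v ⬝ᵥ ε) := dotProduct_neg v ε
    have hfneg : f (-ε) = (max (-(u ⬝ᵥ ε)) 0 - max (-(v ⬝ᵥ ε)) 0) ^ 2 := by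
      rw [hf_def]; simp only [hu', hv']
    have ha : max (u ⬝ᵥ ε) 0 - max (-(u ⬝ᵥ ε)) 0 = u ⬝ᵥ ε :=
      max_zero_sub_max_neg_zero_eq_self _
    have hb : max (v ⬝ᵥ ε) 0 - max (-(v ⬝ᵥ ε)) 0 = v ⬝ᵥ ε :=
      max_zero_sub_max_neg_zero_eq_self _
    have h2 : (u - v) ⬝ᵥ ε = u ⬝ᵥ ε - v ⬝ᵥ ε := sub_dotProduct u v ε
    have key : ∀ p q : ℝ, p - q = u ⬝ᵥ ε - v ⬝ᵥ ε →
        (1 / 2 : ℝ) * (u ⬝ᵥ ε - v ⬝ᵥ ε) ^ 2 ≤ p ^ 2 + q ^ 2 := by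
      intro p q hpq
      rw [← hpq]
      nlinarith [sq_nonneg (p + q)]
    rw [hfneg, h2]
    show (1 / 2 : ℝ) * (u ⬝ᵥ ε - v ⬝ᵥ ε) ^ 2
      ≤ (max (u ⬝ᵥ ε) 0 - max (v ⬝ᵥ ε) 0) ^ 2
        + (max (-(u ⬝ᵥ ε)) 0 - max (-(v ⬝ᵥ ε)) 0) ^ 2
    exact key _ _ (by linarith [ha, hb])
  have hint2 : ∫ ε : Fin d → ℝ, (1 / 2 : ℝ) * ((u - v) ⬝ᵥ ε) ^ 2
      = (1 / 2 : ℝ) * ((u - v) ⬝ᵥ (u - v)) := by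
    rw [integral_const_mul, integral_dot_sq]
  have step1 : ∫ ε : Fin d → ℝ, (1 / 2 : ℝ) * ((u - v) ⬝ᵥ ε) ^ 2
      ≤ ∫ ε : Fin d → ℝ, (f ε + f (-ε)) :=
    integral_mono ((integrable_dot_sq (u - v)).const_mul _) (hf_int.add hg_int) pointwise
  have step2 : ∫ ε : Fin d → ℝ, (f ε + f (-ε)) = 2 * ∫ ε : Fin d → ℝ, f ε := by
    rw [integral_add hf_int hg_int, h_sym]; ring
  rw [hint2] at step1
  rw [step2] at step1
  linarith

end PiGauss

end Stmt6Aux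


/-- For ε ∼ N(0, I_d) standard Gaussian in ℝᵈ and any u, v ∈ ℝᵈ,
E[(relu⟨u,ε⟩ − relu⟨v,ε⟩)²] ≥ (1/4)‖u − v‖². -/
theorem stmt6 (d : ℕ) (u v : Fin d → ℝ) :
    (1 / 4 : ℝ) * ((u - v) ⬝ᵥ (u - v))
      ≤ ∫ ε : Fin d → ℝ,
          (max (u ⬝ᵥ ε) 0 - max (v ⬝ᵥ ε) 0) ^ 2
            ∂(Measure.pi fun _ : Fin d => gaussianReal 0 1) :=
  Stmt6Aux.main_aux d u v
end

section
/- Let ε ∼ N(0, γ·I_d) for some γ > 0 and relu(t) = max(t, 0). For any two vectors u, v ∈ ℝᵈ, E[(relu(⟨u, ε⟩) − relu(⟨v, ε⟩))²] ≥ (γ/4)·‖u − v‖². -/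
section Helpers
open MeasureTheory ProbabilityTheory Real Set Matrix
open scoped NNReal ENNReal


variable {γ : NNReal}

lemma gauss_smul_eq (x : ℝ) (y : ℝ) :
    (gaussianPDFReal 0 γ x).toNNReal • y = gaussianPDFReal 0 γ x * y := by
  rw [NNReal.smul_def, smul_eq_mul, Real.coe_toNNReal _ (gaussianPDFReal_nonneg 0 γ x)]

lemma gauss_integral_eq (hγ : γ ≠ 0) (g : ℝ → ℝ) :
    ∫ x, g x ∂(gaussianReal 0 γ) = ∫ x, gaussianPDFReal 0 γ x * g x := by
  rw [gaussianReal_of_var_ne_zero _ hγ]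
  have h : gaussianPDF 0 γ = fun x => ((Real.toNNReal (gaussianPDFReal 0 γ x) : ℝ≥0) : ℝ≥0∞) := rfl
  rw [h, integral_withDensity_eq_integral_smul ((measurable_gaussianPDFReal 0 γ).real_toNNReal) g]
  congr 1; ext x; exact gauss_smul_eq x (g x)

lemma gauss_integrable_iff (hγ : γ ≠ 0) (g : ℝ → ℝ) :
    Integrable g (gaussianReal 0 γ) ↔ Integrable (fun x => gaussianPDFReal 0 γ x * g x) := by
  rw [gaussianReal_of_var_ne_zero _ hγ]
  have h : gaussianPDF 0 γ = fun x => ((Real.toNNReal (gaussianPDFReal 0 γ x) : ℝ≥0) : ℝ≥0∞) := rfl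
  rw [h, integrable_withDensity_iff_integrable_smul ((measurable_gaussianPDFReal 0 γ).real_toNNReal)]
  have h2 : (fun x => (gaussianPDFReal 0 γ x).toNNReal • g x) = fun x => gaussianPDFReal 0 γ x * g x := by
    ext x; exact gauss_smul_eq x (g x)
  rw [h2]

lemma gauss_pdf_eq : gaussianPDFReal 0 γ =
    fun x => (Real.sqrt (2 * π * γ))⁻¹ * exp (-(2 * (γ:ℝ))⁻¹ * x ^ 2) := by
  ext x
  rw [gaussianPDFReal]
  congr 1
  rw [sub_zero]
  ring_nf

lemma b_pos (hγ : γ ≠ 0) : 0 < (2 * (γ:ℝ))⁻¹ := by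
  have h : 0 < (γ:ℝ) := by exact_mod_cast pos_iff_ne_zero.mpr hγ
  positivity

lemma gauss_integrable_id (hγ : γ ≠ 0) : Integrable (fun x : ℝ => x) (gaussianReal 0 γ) := by
  rw [gauss_integrable_iff hγ, gauss_pdf_eq]
  have hb : 0 < (2 * (γ:ℝ))⁻¹ := b_pos hγ
  have := (integrable_mul_exp_neg_mul_sq hb).const_mul (Real.sqrt (2 * π * γ))⁻¹
  refine this.congr (Filter.Eventually.of_forall fun x => ?_)
  ring

lemma gauss_integrable_sq (hγ : γ ≠ 0) :
    Integrable (fun x : ℝ => x ^ 2) (gaussianReal 0 γ) := by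
  rw [gauss_integrable_iff hγ, gauss_pdf_eq]
  have hb : 0 < (2 * (γ:ℝ))⁻¹ := b_pos hγ
  have h2 := (integrable_rpow_mul_exp_neg_mul_sq hb (by norm_num : (-1:ℝ) < 2)).const_mul
    (Real.sqrt (2 * π * γ))⁻¹
  refine h2.congr (Filter.Eventually.of_forall fun x => ?_)
  have hx : x ^ (2:ℝ) = x ^ (2:ℕ) := by
    rw [← Real.rpow_natCast x 2]; norm_num
  simp only [hx]
  ring

lemma gauss_map_neg : (gaussianReal 0 γ).map (fun x : ℝ => -x) = gaussianReal 0 γ := by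
  have h := gaussianReal_map_const_mul (μ := 0) (v := γ) (-1)
  simp only [neg_one_mul, mul_zero] at h
  convert h using 2
  ext : 1
  norm_num

lemma gauss_integral_id : ∫ x, x ∂(gaussianReal 0 γ) = 0 := by
  have h : ∫ x, x ∂(gaussianReal 0 γ) = ∫ x, -x ∂(gaussianReal 0 γ) := by
    conv_lhs => rw [← gauss_map_neg (γ := γ)]
    rw [integral_map (φ := fun x : ℝ => -x) measurable_neg.aemeasurable
      (f := fun y : ℝ => y) aestronglyMeasurable_id]
  rw [integral_neg] at h
  linarith

lemma integral_sq_exp {b : ℝ} (hb : 0 < b) :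
    ∫ x : ℝ, x ^ 2 * exp (-b * x ^ 2) = b ^ (-(3:ℝ)/2) * Real.sqrt π / 2 := by
  have h1 : (fun x : ℝ => x ^ 2 * exp (-b * x ^ 2)) = fun x : ℝ => |x| ^ 2 * exp (-b * |x| ^ 2) := by
    ext x; rw [sq_abs]
  rw [h1, integral_comp_abs (f := fun x : ℝ => x ^ 2 * exp (-b * x ^ 2))]
  have h2 : ∀ x ∈ Ioi (0:ℝ), x ^ 2 * exp (-b * x ^ 2) = x ^ (2:ℝ) * exp (-b * x ^ (2:ℝ)) := by
    intro x hx
    rw [show (2:ℝ) = ((2:ℕ):ℝ) by norm_num, Real.rpow_natCast]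
  rw [setIntegral_congr_fun measurableSet_Ioi h2,
    integral_rpow_mul_exp_neg_mul_rpow (by norm_num) (by norm_num) hb]
  have h3 : ((2:ℝ) + 1) / 2 = 1/2 + 1 := by norm_num
  rw [h3, Real.Gamma_add_one (by norm_num), Real.Gamma_one_half_eq]
  ring_nf

lemma gauss_integral_sq (hγ : γ ≠ 0) : ∫ x, x ^ 2 ∂(gaussianReal 0 γ) = γ := by
  rw [gauss_integral_eq hγ, gauss_pdf_eq]
  have hγ' : 0 < (γ:ℝ) := by exact_mod_cast pos_iff_ne_zero.mpr hγ
  have hb : 0 < (2 * (γ:ℝ))⁻¹ := b_pos hγ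
  have h1 : (fun x : ℝ => (Real.sqrt (2 * π * γ))⁻¹ * exp (-(2 * (γ:ℝ))⁻¹ * x ^ 2) * x ^ 2)
      = fun x : ℝ => (Real.sqrt (2 * π * γ))⁻¹ * (x ^ 2 * exp (-(2 * (γ:ℝ))⁻¹ * x ^ 2)) := by
    ext x; ring
  rw [h1, integral_const_mul, integral_sq_exp hb]
  -- algebra
  have h2γ : 0 < 2 * (γ:ℝ) := by linarith
  have hinv : ((2 * (γ:ℝ))⁻¹) ^ (-(3:ℝ)/2) = (2 * (γ:ℝ)) ^ ((3:ℝ)/2) := by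
    rw [← Real.rpow_neg_one (2 * (γ:ℝ)), ← Real.rpow_mul h2γ.le]
    norm_num
  rw [hinv]
  have h32 : (2 * (γ:ℝ)) ^ ((3:ℝ)/2) = (2 * (γ:ℝ)) * Real.sqrt (2 * (γ:ℝ)) := by
    rw [show (3:ℝ)/2 = 1 + 1/2 by norm_num, Real.rpow_add h2γ, Real.rpow_one,
      ← Real.sqrt_eq_rpow]
  have hsq : Real.sqrt (2 * π * γ) = Real.sqrt (2 * (γ:ℝ)) * Real.sqrt π := by
    rw [← Real.sqrt_mul h2γ.le]
    congr 1; ring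
  rw [h32, hsq]
  have h1' : Real.sqrt (2 * (γ:ℝ)) ≠ 0 := by positivity
  have h2' : Real.sqrt π ≠ 0 := by positivity
  field_simp

lemma my_integrable_pi_prod {n : ℕ} (μ : Measure ℝ) [IsProbabilityMeasure μ]
    {f : Fin n → ℝ → ℝ} (hf : ∀ i, Integrable (f i) μ) :
    Integrable (fun x : Fin n → ℝ => ∏ i, f i (x i)) (Measure.pi fun _ => μ) := by
  induction n with
  | zero => simp only [Finset.univ_eq_empty, Finset.prod_empty]; exact integrable_const 1
  | succ n n_ih =>
      have := ((measurePreserving_piFinSuccAbove (fun _ : Fin (n+1) => μ) 0).symm)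
      rw [← this.integrable_comp_emb (MeasurableEquiv.measurableEmbedding _)]
      simp_rw [MeasurableEquiv.piFinSuccAbove_symm_apply, Fin.insertNthEquiv,
        Fin.prod_univ_succ, Fin.insertNth_zero]
      simp only [Fin.zero_succAbove, Function.comp_def, Fin.cons_zero, Fin.cons_succ,
        Equiv.coe_fn_mk, cast_eq]
      have h2 : Integrable (fun (x : Fin n → ℝ) ↦ ∏ j, f (Fin.succ j) (x j))
          (Measure.pi fun _ => μ) := n_ih (fun i ↦ hf _)
      exact Integrable.mul_prod (hf 0) h2

lemma my_integral_pi_prod {n : ℕ} (μ : Measure ℝ) [IsProbabilityMeasure μ]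
    (f : Fin n → ℝ → ℝ) :
    ∫ x : Fin n → ℝ, ∏ i, f i (x i) ∂(Measure.pi fun _ => μ) = ∏ i, ∫ x, f i x ∂μ := by
  induction n with
  | zero => simp
  | succ n n_ih =>
      calc
        _ = ∫ x : ℝ × (Fin n → ℝ),
            f 0 x.1 * ∏ i : Fin n, f (Fin.succ i) (x.2 i) ∂(μ.prod (Measure.pi fun _ => μ)) := by
          rw [← ((measurePreserving_piFinSuccAbove
            (fun _ : Fin (n+1) => μ) 0).symm).integral_comp']
          simp_rw [MeasurableEquiv.piFinSuccAbove_symm_apply, Fin.insertNthEquiv,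
            Fin.prod_univ_succ, Fin.insertNth_zero]
          simp only [Fin.zero_succAbove, Function.comp_def, Fin.cons_zero, Fin.cons_succ,
            Equiv.coe_fn_mk, cast_eq]
        _ = (∫ x, f 0 x ∂μ) * ∏ i : Fin n, ∫ x, f (Fin.succ i) x ∂μ := by
          rw [← n_ih, ← integral_prod_mul]
        _ = ∏ i, ∫ x, f i x ∂μ := by rw [Fin.prod_univ_succ]

section Pi
variable {γ : NNReal} {d : ℕ}

/-- the coordinate factor functions for `ε i * ε j` -/
noncomputable def gk (i j k : Fin d) : ℝ → ℝ :=
  fun x => (if k = i then x else 1) * (if k = j then x else 1)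

lemma mul_self_eq_sq_fun : (fun x : ℝ => x * x) = fun x : ℝ => x ^ 2 :=
  funext fun x => (pow_two x).symm

lemma gk_integrable (hγ : γ ≠ 0) (i j k : Fin d) : Integrable (gk i j k) (gaussianReal 0 γ) := by
  unfold gk
  by_cases hki : k = i <;> by_cases hkj : k = j
  · simp only [if_pos hki, if_pos hkj, mul_self_eq_sq_fun]
    exact gauss_integrable_sq hγ
  · simp only [if_pos hki, if_neg hkj, mul_one]
    exact gauss_integrable_id hγ
  · simp only [if_neg hki, if_pos hkj, one_mul]
    exact gauss_integrable_id hγ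
  · simp only [if_neg hki, if_neg hkj, mul_one]
    exact integrable_const 1
lemma prod_gk_eq (i j : Fin d) (ε : Fin d → ℝ) : (∏ k, gk i j k (ε k)) = ε i * ε j := by
  unfold gk
  rw [Finset.prod_mul_distrib, Fintype.prod_ite_eq', Fintype.prod_ite_eq']

lemma eps_mul_integrable (hγ : γ ≠ 0) (i j : Fin d) :
    Integrable (fun ε : Fin d → ℝ => ε i * ε j) (Measure.pi fun _ => gaussianReal 0 γ) := by
  refine (my_integrable_pi_prod (gaussianReal 0 γ) (gk_integrable hγ i j)).congr
    (Filter.Eventually.of_forall fun ε => prod_gk_eq i j ε)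

lemma eps_mul_integral (hγ : γ ≠ 0) (i j : Fin d) :
    ∫ ε : Fin d → ℝ, ε i * ε j ∂(Measure.pi fun _ => gaussianReal 0 γ)
      = if i = j then (γ:ℝ) else 0 := by
  have h1 : (fun ε : Fin d → ℝ => ε i * ε j) = fun ε => ∏ k, gk i j k (ε k) := by
    ext ε; exact (prod_gk_eq i j ε).symm
  rw [h1, my_integral_pi_prod (gaussianReal 0 γ) (gk i j)]
  by_cases hij : i = j
  · subst hij
    rw [if_pos rfl]
    have hc : ∀ k, (∫ x, gk i i k x ∂(gaussianReal 0 γ)) = if k = i then (γ:ℝ) else 1 := by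
      intro k
      unfold gk
      by_cases hk : k = i
      · subst hk
        simp only [eq_self_iff_true, if_true]
        rw [show (fun x : ℝ => x * x) = fun x : ℝ => x ^ 2 from mul_self_eq_sq_fun]
        exact gauss_integral_sq hγ
      · simp only [if_neg hk, one_mul, mul_one]
        simp
    simp_rw [hc]
    rw [Fintype.prod_ite_eq']
  · rw [if_neg hij]
    refine Finset.prod_eq_zero (Finset.mem_univ i) ?_
    unfold gk
    simp only [eq_self_iff_true, if_true, if_neg hij, mul_one]
    exact gauss_integral_id

end Pi

section Quad
open Matrix
variable {γ : NNReal} {d : ℕ}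

lemma dot_sq_expand (w : Fin d → ℝ) (ε : Fin d → ℝ) :
    (w ⬝ᵥ ε) ^ 2 = ∑ i, ∑ j, (w i * w j) * (ε i * ε j) := by
  show (∑ i, w i * ε i) ^ 2 = _
  rw [sq, Finset.sum_mul_sum]
  refine Finset.sum_congr rfl fun i _ => Finset.sum_congr rfl fun j _ => by ring

lemma dot_sq_integrable (hγ : γ ≠ 0) (w : Fin d → ℝ) :
    Integrable (fun ε : Fin d → ℝ => (w ⬝ᵥ ε) ^ 2) (Measure.pi fun _ => gaussianReal 0 γ) := by
  simp_rw [dot_sq_expand]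
  exact integrable_finset_sum _ fun i _ => integrable_finset_sum _ fun j _ =>
    (eps_mul_integrable hγ i j).const_mul _

lemma dot_sq_integral (hγ : γ ≠ 0) (w : Fin d → ℝ) :
    ∫ ε : Fin d → ℝ, (w ⬝ᵥ ε) ^ 2 ∂(Measure.pi fun _ => gaussianReal 0 γ)
      = (γ : ℝ) * (w ⬝ᵥ w) := by
  simp_rw [dot_sq_expand]
  rw [integral_finset_sum _ fun i _ => integrable_finset_sum _ fun j _ =>
    (eps_mul_integrable hγ i j).const_mul _]
  have h : ∀ i : Fin d, (∫ ε : Fin d → ℝ, ∑ j, (w i * w j) * (ε i * ε j)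
      ∂(Measure.pi fun _ => gaussianReal 0 γ)) = w i * w i * γ := by
    intro i
    rw [integral_finset_sum _ fun j _ => (eps_mul_integrable hγ i j).const_mul _]
    have h2 : ∀ j : Fin d, (∫ ε : Fin d → ℝ, (w i * w j) * (ε i * ε j)
        ∂(Measure.pi fun _ => gaussianReal 0 γ)) = w i * w j * (if i = j then (γ:ℝ) else 0) := by
      intro j
      rw [integral_const_mul, eps_mul_integral hγ]
    simp_rw [h2]
    simp [mul_ite, mul_zero, Finset.sum_ite_eq]
  simp_rw [h]
  show _ = (γ:ℝ) * ∑ i, w i * w i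
  rw [Finset.mul_sum]
  exact Finset.sum_congr rfl fun i _ => by ring

end Quad


lemma relu_lipschitz_sq (a b : ℝ) : (max a 0 - max b 0) ^ 2 ≤ (a - b) ^ 2 := by
  have h := abs_max_sub_max_le_abs a b 0
  calc (max a 0 - max b 0) ^ 2 = |max a 0 - max b 0| ^ 2 := (sq_abs _).symm
    _ ≤ |a - b| ^ 2 := pow_le_pow_left₀ (abs_nonneg _) h 2
    _ = (a - b) ^ 2 := sq_abs _

lemma relu_sub_neg (a : ℝ) : max a 0 - max (-a) 0 = a := by
  rcases le_total a 0 with h | h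
  · rw [max_eq_right h, max_eq_left (neg_nonneg.mpr h)]; ring
  · rw [max_eq_left h, max_eq_right (neg_nonpos.mpr h)]; ring

lemma relu_symm_sq (a b : ℝ) :
    (1/2) * (a - b) ^ 2 ≤ (max a 0 - max b 0) ^ 2 + (max (-a) 0 - max (-b) 0) ^ 2 := by
  have ha := relu_sub_neg a
  have hb := relu_sub_neg b
  have hpq : a - b = (max a 0 - max b 0) - (max (-a) 0 - max (-b) 0) := by linarith
  rw [hpq]
  nlinarith [sq_nonneg ((max a 0 - max b 0) + (max (-a) 0 - max (-b) 0))]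


end Helpers

open MeasureTheory ProbabilityTheory Matrix

/-- For ε ∼ N(0, γI_d) with γ > 0 and any u, v ∈ ℝᵈ,
E[(relu⟨u,ε⟩ − relu⟨v,ε⟩)²] ≥ (γ/4)‖u − v‖². -/
theorem stmt7 (d : ℕ) (γ : NNReal) (hγ : 0 < γ) (u v : Fin d → ℝ) :
    ((γ : ℝ) / 4) * ((u - v) ⬝ᵥ (u - v))
      ≤ ∫ ε : Fin d → ℝ,
          (max (u ⬝ᵥ ε) 0 - max (v ⬝ᵥ ε) 0) ^ 2
            ∂(Measure.pi fun _ : Fin d => gaussianReal 0 γ) := by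
  classical
  have hγ' : γ ≠ 0 := hγ.ne'
  set μd := Measure.pi fun _ : Fin d => gaussianReal 0 γ with hμd
  set w := u - v with hw
  set f : (Fin d → ℝ) → ℝ := fun ε => (max (u ⬝ᵥ ε) 0 - max (v ⬝ᵥ ε) 0) ^ 2 with hf
  -- continuity / measurability
  have hdotc : ∀ z : Fin d → ℝ, Continuous fun ε : Fin d → ℝ => z ⬝ᵥ ε := by
    intro z
    show Continuous fun ε : Fin d → ℝ => ∑ i, z i * ε i
    exact continuous_finset_sum _ fun i _ => continuous_const.mul (continuous_apply i)
  have hfc : Continuous f :=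
    ((((hdotc u).max continuous_const).sub ((hdotc v).max continuous_const)).pow 2)
  -- integrability of f
  have hg_int : Integrable (fun ε : Fin d → ℝ => (w ⬝ᵥ ε) ^ 2) μd := dot_sq_integrable hγ' w
  have hb : ∀ ε : Fin d → ℝ, f ε ≤ (w ⬝ᵥ ε) ^ 2 := by
    intro ε
    have : w ⬝ᵥ ε = u ⬝ᵥ ε - v ⬝ᵥ ε := sub_dotProduct u v ε
    rw [this]
    exact relu_lipschitz_sq _ _
  have hf_int : Integrable f μd := by
    refine hg_int.mono' hfc.aestronglyMeasurable (Filter.Eventually.of_forall fun ε => ?_)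
    rw [Real.norm_eq_abs, abs_of_nonneg (sq_nonneg _)]
    exact hb ε
  -- negation invariance
  have hpres : MeasurePreserving (fun ε : Fin d → ℝ => -ε) μd μd := by
    have h1 : MeasurePreserving (fun x : ℝ => -x) (gaussianReal 0 γ) (gaussianReal 0 γ) :=
      ⟨measurable_neg, gauss_map_neg⟩
    exact measurePreserving_pi _ _ fun _ => h1
  have hfneg_int : Integrable (fun ε => f (-ε)) μd := by
    have he : MeasurableEmbedding (fun ε : Fin d → ℝ => -ε) :=
      (Homeomorph.neg (Fin d → ℝ)).measurableEmbedding
    exact (hpres.integrable_comp_emb he).mpr hf_int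
  have hfneg_eq : ∫ ε, f (-ε) ∂μd = ∫ ε, f ε ∂μd := by
    have he : MeasurableEmbedding (fun ε : Fin d → ℝ => -ε) :=
      (Homeomorph.neg (Fin d → ℝ)).measurableEmbedding
    have h2 := he.integral_map (μ := μd) (g := f)
    rw [hpres.map_eq] at h2
    exact h2.symm
  -- pointwise inequality
  have hkey : ∀ ε : Fin d → ℝ, (1/2) * (w ⬝ᵥ ε) ^ 2 ≤ f ε + f (-ε) := by
    intro ε
    have h1 : u ⬝ᵥ (-ε) = -(u ⬝ᵥ ε) := dotProduct_neg u ε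
    have h2 : v ⬝ᵥ (-ε) = -(v ⬝ᵥ ε) := dotProduct_neg v ε
    have h3 : w ⬝ᵥ ε = u ⬝ᵥ ε - v ⬝ᵥ ε := sub_dotProduct u v ε
    simp only [hf, h1, h2, h3]
    exact relu_symm_sq _ _
  -- integrate
  have hmono : ∫ ε, (1/2) * (w ⬝ᵥ ε) ^ 2 ∂μd ≤ ∫ ε, (f ε + f (-ε)) ∂μd := by
    exact integral_mono (hg_int.const_mul _) (hf_int.add hfneg_int) hkey
  rw [integral_const_mul, dot_sq_integral hγ' w, integral_add hf_int hfneg_int, hfneg_eq] at hmono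
  have : ∫ ε, f ε ∂μd = ∫ ε : Fin d → ℝ,
      (max (u ⬝ᵥ ε) 0 - max (v ⬝ᵥ ε) 0) ^ 2 ∂μd := rfl
  linarith [hmono]
end

section
/- Let x_{i+1} = σ(Θ* x_i) + ε_{i} with x₀ = 0, where (Θ*)ᵀ K Θ* ⪯ ρ·K for a diagonal K ⪰ I and 0 ≤ ρ < 1, σ is coordinatewise 1-Lipschitz with σ(0) = 0, and suppose every noise vector satisfies ‖ε_i‖_K² ≤ E for some E ≥ 0. Then for every i, ‖K^{1/2} x_i‖ ≤ sqrt(E)/(1 − sqrt(ρ)) ≤ 2·sqrt(E)/(1 − ρ). -/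
open Matrix

/-- For x_{i+1} = σ(Θ*x_i) + ε_i with x₀ = 0, (Θ*)ᵀKΘ* ⪯ ρK
(K ⪰ I diagonal, 0 ≤ ρ < 1), σ coordinatewise 1-Lipschitz with σ(0) = 0, and
‖ε_i‖_K² ≤ E for all i, we have ‖K^{1/2}x_i‖ = ‖x_i‖_K ≤ √E/(1 − √ρ) ≤ 2√E/(1 − ρ). -/
theorem stmt18 (d : ℕ) (K Θs : Matrix (Fin d) (Fin d) ℝ)
    (hKdiag : K.IsDiag) (hKI : (K - 1).PosSemidef)
    (ρ : ℝ) (hρ0 : 0 ≤ ρ) (hρ1 : ρ < 1)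
    (hLyap : (ρ • K - Θsᵀ * K * Θs).PosSemidef)
    (σ : Fin d → ℝ → ℝ)
    (hLip : ∀ i, LipschitzWith 1 (σ i)) (hzero : ∀ i, σ i 0 = 0)
    (x ε : ℕ → Fin d → ℝ) (E : ℝ) (hE : 0 ≤ E)
    (hx0 : x 0 = 0)
    (hdyn : ∀ i, x (i + 1) = (fun j => σ j (Θs.mulVec (x i) j)) + ε i)
    (hεbd : ∀ i, ε i ⬝ᵥ K.mulVec (ε i) ≤ E) :
    ∀ i, Real.sqrt (x i ⬝ᵥ K.mulVec (x i)) ≤ Real.sqrt E / (1 - Real.sqrt ρ) ∧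
      Real.sqrt E / (1 - Real.sqrt ρ) ≤ 2 * Real.sqrt E / (1 - ρ) := by
  classical
  -- diagonal entries of K are ≥ 1
  have hK1 : ∀ j, (1:ℝ) ≤ K j j := by
    intro j
    have h := hKI.dotProduct_mulVec_nonneg (Pi.single j 1)
    have he : star (Pi.single j 1 : Fin d → ℝ) ⬝ᵥ (K - 1).mulVec (Pi.single j 1)
        = K j j - 1 := by
      simp [star, single_dotProduct, Matrix.mulVec_single, Matrix.sub_apply,
        Matrix.one_apply]
    rw [he] at h
    · linarith
  have hK0 : ∀ j, (0:ℝ) ≤ K j j := fun j => le_trans zero_le_one (hK1 j)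
  -- quadratic form as sum
  have hquad : ∀ v : Fin d → ℝ, v ⬝ᵥ K.mulVec v = ∑ j, K j j * v j ^ 2 := by
    intro v
    unfold dotProduct Matrix.mulVec
    refine Finset.sum_congr rfl fun j _ => ?_
    have : (fun k => K j k * v k) = fun k => (K j k * v k) := rfl
    rw [show (K j) ⬝ᵥ v = ∑ k, K j k * v k from rfl]
    rw [Finset.sum_eq_single j]
    · ring
    · intro k _ hk; rw [hKdiag (Ne.symm hk)]; ring
    · intro h; exact absurd (Finset.mem_univ j) h
  -- the map to Euclidean space
  set F : (Fin d → ℝ) → EuclideanSpace ℝ (Fin d) :=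
    fun v => WithLp.toLp 2 (fun j => Real.sqrt (K j j) * v j) with hF
  have hnorm : ∀ v : Fin d → ℝ, Real.sqrt (v ⬝ᵥ K.mulVec v) = ‖F v‖ := by
    intro v
    rw [EuclideanSpace.norm_eq, hquad]
    congr 1
    refine Finset.sum_congr rfl fun j _ => ?_
    rw [Real.norm_eq_abs, sq_abs]
    rw [mul_pow, Real.sq_sqrt (hK0 j)]
  -- Lyapunov contraction
  have hcontr : ∀ v : Fin d → ℝ, ‖F (Θs.mulVec v)‖ ≤ Real.sqrt ρ * ‖F v‖ := by
    intro v
    have h := hLyap.dotProduct_mulVec_nonneg v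
    have he : star v ⬝ᵥ (ρ • K - Θsᵀ * K * Θs).mulVec v
        = ρ * (v ⬝ᵥ K.mulVec v) - (Θs.mulVec v ⬝ᵥ K.mulVec (Θs.mulVec v)) := by
      have hTT : v ⬝ᵥ (Θsᵀ * K * Θs) *ᵥ v = Θs *ᵥ v ⬝ᵥ K *ᵥ Θs *ᵥ v := by
        conv_lhs => rw [mul_assoc, ← Matrix.mulVec_mulVec, Matrix.dotProduct_mulVec,
          Matrix.vecMul_transpose]
        rw [Matrix.mulVec_mulVec]
      rw [show (star v : Fin d → ℝ) = v from rfl, Matrix.sub_mulVec,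
        dotProduct_sub, Matrix.smul_mulVec, dotProduct_smul,
        smul_eq_mul, hTT]
    rw [he] at h
    have hsq : Θs.mulVec v ⬝ᵥ K.mulVec (Θs.mulVec v) ≤ ρ * (v ⬝ᵥ K.mulVec v) := by linarith
    have h1 : ‖F (Θs.mulVec v)‖ = Real.sqrt (Θs.mulVec v ⬝ᵥ K.mulVec (Θs.mulVec v)) :=
      (hnorm _).symm
    have h2 : Real.sqrt (v ⬝ᵥ K.mulVec v) = ‖F v‖ := hnorm v
    rw [h1, ← h2, ← Real.sqrt_mul hρ0]
    exact Real.sqrt_le_sqrt hsq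
  -- sigma contraction
  have hsig : ∀ v : Fin d → ℝ, ‖F (fun j => σ j (v j))‖ ≤ ‖F v‖ := by
    intro v
    rw [EuclideanSpace.norm_eq, EuclideanSpace.norm_eq]
    apply Real.sqrt_le_sqrt
    refine Finset.sum_le_sum fun j _ => ?_
    have hσ : |σ j (v j)| ≤ |v j| := by
      have := (hLip j).dist_le_mul (v j) 0
      simpa [hzero j, Real.dist_eq] using this
    have h0 : (0:ℝ) ≤ Real.sqrt (K j j) := Real.sqrt_nonneg _
    simp only [hF, Real.norm_eq_abs, sq_abs]
    have : |Real.sqrt (K j j) * σ j (v j)| ≤ |Real.sqrt (K j j) * v j| := by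
      rw [abs_mul, abs_mul]
      exact mul_le_mul_of_nonneg_left hσ (abs_nonneg _)
    calc (Real.sqrt (K j j) * σ j (v j)) ^ 2 = |Real.sqrt (K j j) * σ j (v j)| ^ 2 := (sq_abs _).symm
      _ ≤ |Real.sqrt (K j j) * v j| ^ 2 := by
          exact pow_le_pow_left₀ (abs_nonneg _) this 2
      _ = (Real.sqrt (K j j) * v j) ^ 2 := sq_abs _
  have hεn : ∀ i, ‖F (ε i)‖ ≤ Real.sqrt E := by
    intro i
    rw [← hnorm]
    exact Real.sqrt_le_sqrt (hεbd i)
  have hsρ : Real.sqrt ρ < 1 := by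
    rw [show (1:ℝ) = Real.sqrt 1 from (Real.sqrt_one).symm]
    exact Real.sqrt_lt_sqrt hρ0 hρ1
  have hpos : 0 < 1 - Real.sqrt ρ := by linarith
  set B : ℝ := Real.sqrt E / (1 - Real.sqrt ρ) with hB
  have hBeq : Real.sqrt ρ * B + Real.sqrt E = B := by
    rw [hB]
    field_simp
    ring
  have hmain : ∀ i, Real.sqrt (x i ⬝ᵥ K.mulVec (x i)) ≤ B := by
    intro i
    induction i with
    | zero =>
      rw [hx0]
      simp only [zero_dotProduct, Matrix.mulVec_zero]
      rw [Real.sqrt_zero]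
      exact div_nonneg (Real.sqrt_nonneg _) hpos.le
    | succ n ih =>
      rw [hnorm, hdyn n]
      have hadd : F ((fun j => σ j (Θs.mulVec (x n) j)) + ε n)
          = F (fun j => σ j (Θs.mulVec (x n) j)) + F (ε n) := by
        ext j
        simp [hF, mul_add]
      rw [hadd]
      calc ‖F (fun j => σ j (Θs.mulVec (x n) j)) + F (ε n)‖
          ≤ ‖F (fun j => σ j (Θs.mulVec (x n) j))‖ + ‖F (ε n)‖ := norm_add_le _ _
        _ ≤ Real.sqrt ρ * ‖F (x n)‖ + Real.sqrt E := by
            have := (hsig (Θs.mulVec (x n))).trans (hcontr (x n))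
            exact add_le_add this (hεn n)
        _ ≤ Real.sqrt ρ * B + Real.sqrt E := by
            have : ‖F (x n)‖ ≤ B := by rw [← hnorm]; exact ih
            nlinarith [Real.sqrt_nonneg ρ]
        _ = B := hBeq
  intro i
  refine ⟨hmain i, ?_⟩
  have h1ρ : 1 - ρ = (1 - Real.sqrt ρ) * (1 + Real.sqrt ρ) := by
    have := Real.sq_sqrt hρ0
    nlinarith
  rw [div_le_div_iff₀ hpos (by nlinarith [Real.sqrt_nonneg ρ] : (0:ℝ) < 1 - ρ)]
  rw [h1ρ]
  have hsE : 0 ≤ Real.sqrt E := Real.sqrt_nonneg _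
  nlinarith [mul_nonneg (mul_nonneg hsE hpos.le) hpos.le, Real.sqrt_nonneg ρ]
end
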